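/- There exists a constant C, depending only on c_φ, C_φ, τ, M, S₀ and ∫x²φ(x)dx, such that for every n ≥ 1, every σ > 0 with √n·σ ≤ S₀ and every θ₀ ∈ ℝ with |θ₀| ≤ Mσ, the expectation over ε ~ N(0,1) of the posterior second moment satisfies E[B_{n,σ,θ₀}(ε)] ≤ C σ². -/

import Mathlib

open MeasureTheory ProbabilityTheory
open scoped NNReal ENNReal

/-- Denominator integral `D_{n,σ,θ₀}(ε)`. -/
noncomputable def Dint (φ : ℝ → ℝ) (n : ℕ) (σ θ₀ ε : ℝ) : ℝ :=
  ∫ v : ℝ, Real.exp (-v ^ 2 / 2 + ε * v) *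
    ((Real.sqrt n * σ)⁻¹ * φ ((θ₀ + v / Real.sqrt n) / σ))

/-- Numerator integral `N_{n,σ,θ₀}(ε)`. -/
noncomputable def Nint (φ : ℝ → ℝ) (n : ℕ) (σ θ₀ ε : ℝ) : ℝ :=
  ∫ v : ℝ, v ^ 2 * Real.exp (-v ^ 2 / 2 + ε * v) *
    ((Real.sqrt n * σ)⁻¹ * φ ((θ₀ + v / Real.sqrt n) / σ))

/-- Posterior second moment `B_{n,σ,θ₀}(ε) = N/(n·D)`. -/
noncomputable def Bpost (φ : ℝ → ℝ) (n : ℕ) (σ θ₀ ε : ℝ) : ℝ :=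
  Nint φ n σ θ₀ ε / (n * Dint φ n σ θ₀ ε)

/-! ### Auxiliary lemmas -/

lemma mgf_fun_eq (y : ℝ) :
    (fun x => gaussianPDFReal 0 1 x * Real.exp (x * y)) =
      fun x => Real.exp (y ^ 2 / 2) * gaussianPDFReal y 1 x := by
  funext x
  simp only [gaussianPDFReal, NNReal.coe_one, mul_one, sub_zero]
  rw [mul_assoc, ← Real.exp_add, mul_comm (Real.exp (y ^ 2 / 2)), mul_assoc, ← Real.exp_add]
  congr 1
  ring

lemma mgf_int (y : ℝ) :
    Integrable (fun x => gaussianPDFReal 0 1 x * Real.exp (x * y)) := by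
  rw [mgf_fun_eq]
  exact (integrable_gaussianPDFReal y 1).const_mul _

lemma mgf_val (y : ℝ) :
    (∫ x : ℝ, gaussianPDFReal 0 1 x * Real.exp (x * y)) = Real.exp (y ^ 2 / 2) := by
  rw [mgf_fun_eq]
  rw [integral_const_mul, integral_gaussianPDFReal_eq_one y one_ne_zero, mul_one]

lemma int_exp_quad (ε : ℝ) : Integrable (fun v : ℝ => Real.exp (-v ^ 2 / 2 + ε * v)) := by
  have h : (fun v : ℝ => Real.exp (-v ^ 2 / 2 + ε * v)) =
      fun v => Real.exp (ε ^ 2 / 2) * Real.exp (-(1 / 2) * (v - ε) ^ 2) := by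
    funext v
    rw [← Real.exp_add]
    congr 1
    ring
  rw [h]
  exact ((integrable_exp_neg_mul_sq (by norm_num : (0:ℝ) < 1 / 2)).comp_sub_right ε).const_mul _

lemma lb_aux {f : ℝ → ℝ} {a b c : ℝ} (hab : a < b) (hf_int : Integrable f)
    (hf0 : ∀ v, 0 ≤ f v) (hfc : ∀ v ∈ Set.Ioo a b, c ≤ f v) :
    c * (b - a) ≤ ∫ v, f v := by
  have h1 : c * (b - a) = ∫ _v in Set.Ioo a b, c := by
    rw [setIntegral_const, measureReal_def, Real.volume_Ioo, ENNReal.toReal_ofReal (by linarith), smul_eq_mul]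
    ring
  rw [h1]
  calc (∫ _v in Set.Ioo a b, c)
      ≤ ∫ v in Set.Ioo a b, f v := by
        refine setIntegral_mono_on ?_ hf_int.integrableOn measurableSet_Ioo hfc
        exact (integrableOn_const_iff (C := c)).mpr (Or.inr (by rw [Real.volume_Ioo]; exact ENNReal.ofReal_lt_top))
    _ ≤ ∫ v, f v := setIntegral_le_integral hf_int (ae_of_all _ hf0)

set_option maxHeartbeats 1600000 in
theorem small_sigma_bound (φ : ℝ → ℝ) (cφ Cφ τ M S₀ : ℝ)
    (hφ_meas : Measurable φ) (hφ_nonneg : ∀ x, 0 ≤ φ x)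
    (hφ_prob : (∫ x : ℝ, φ x) = 1)
    (hc : 0 < cφ) (hcC : cφ ≤ Cφ)
    (hub : ∀ x : ℝ, φ x ≤ Cφ)
    (hlb : ∀ x ∈ Set.Ioo (-τ) τ, cφ ≤ φ x)
    (hmom : Integrable (fun x : ℝ => x ^ 2 * φ x))
    (hM : 0 < M) (hτ : M + 1 ≤ τ) (hS : 0 < S₀) :
    ∃ C : ℝ, ∀ n : ℕ, 1 ≤ n → ∀ σ : ℝ, 0 < σ → Real.sqrt n * σ ≤ S₀ →
      ∀ θ₀ : ℝ, |θ₀| ≤ M * σ →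
        (∫ ε, Bpost φ n σ θ₀ ε ∂(gaussianReal 0 1)) ≤ C * σ ^ 2 := by
  -- basic integrability of φ
  have hφ_int : Integrable φ := by
    by_contra h
    rw [integral_undef h] at hφ_prob
    norm_num at hφ_prob
  set m₂ : ℝ := ∫ x : ℝ, x ^ 2 * φ x with hm₂
  set c₁ : ℝ := cφ * Real.exp (-S₀ ^ 2 / 2) with hc₁
  have hc₁pos : 0 < c₁ := mul_pos hc (Real.exp_pos _)
  refine ⟨2 * (m₂ + M ^ 2) / c₁, ?_⟩
  intro n hn σ hσ hsS θ₀ hθ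
  have hn0 : (0:ℝ) < n := by exact_mod_cast hn
  have hsn : (0:ℝ) < Real.sqrt n := Real.sqrt_pos.mpr hn0
  set s : ℝ := Real.sqrt n * σ with hs_def
  have hs : 0 < s := mul_pos hsn hσ
  set t : ℝ := θ₀ / σ with ht_def
  have ht : |t| ≤ M := by
    rw [ht_def, abs_div, abs_of_pos hσ, div_le_iff₀ hσ]
    exact hθ
  have htM : -M ≤ t ∧ t ≤ M := abs_le.mp ht
  have harg : ∀ v : ℝ, (θ₀ + v / Real.sqrt n) / σ = v / s + t := by
    intro v
    rw [ht_def, hs_def]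
    field_simp
    ring
  -- measurability of the argument map
  have hmeas_arg : Measurable fun v : ℝ => (θ₀ + v / Real.sqrt n) / σ :=
    ((measurable_id.div_const _).const_add θ₀).div_const σ
  have hmeas_g : Measurable fun v : ℝ => (Real.sqrt n * σ)⁻¹ * φ ((θ₀ + v / Real.sqrt n) / σ) :=
    (hφ_meas.comp hmeas_arg).const_mul _
  -- integrability of x φ, q, etc.
  have hxφ : Integrable (fun x : ℝ => x * φ x) := by
    have hb : Integrable (fun x : ℝ => (1/2) * (φ x + x ^ 2 * φ x)) := by
      exact ((hφ_int.add hmom).const_mul (1/2) : _)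
    refine hb.mono' ((measurable_id.mul hφ_meas).aestronglyMeasurable) (ae_of_all _ fun x => ?_)
    rw [Real.norm_eq_abs, abs_mul, abs_of_nonneg (hφ_nonneg x)]
    have h1 : |x| ≤ (1 + x ^ 2) / 2 := by nlinarith [sq_nonneg (|x| - 1), sq_abs x]
    nlinarith [mul_le_mul_of_nonneg_right h1 (hφ_nonneg x)]
  set q : ℝ → ℝ := fun x => (x - t) ^ 2 * φ x with hq_def
  have hq_int : Integrable q := by
    have : q = fun x => (x ^ 2 * φ x - (2 * t) * (x * φ x)) + t ^ 2 * φ x := by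
      funext x; rw [hq_def]; ring
    rw [this]
    exact (hmom.sub (hxφ.const_mul (2 * t))).add (hφ_int.const_mul (t ^ 2))
  have hr_int : Integrable (fun x : ℝ => q (x + t)) := hq_int.comp_add_right t
  -- the function v ↦ v² g(v)
  have hv2g_eq : (fun y : ℝ => y ^ 2 * ((Real.sqrt n * σ)⁻¹ * φ ((θ₀ + y / Real.sqrt n) / σ))) =
      fun y => s * q (y / s + t) := by
    funext y
    rw [harg y]
    simp only [hq_def]
    have h2 : y / s + t - t = y / s := by ring
    rw [h2, hs_def]
    field_simp
  have hIv2g : Integrable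
      (fun y : ℝ => y ^ 2 * ((Real.sqrt n * σ)⁻¹ * φ ((θ₀ + y / Real.sqrt n) / σ))) := by
    rw [hv2g_eq]
    have : (fun y : ℝ => s * q (y / s + t)) = fun y => s * (fun x => q (x + t)) (y / s) := rfl
    rw [this]
    exact (hr_int.comp_div hs.ne').const_mul s
  have hIv2g_val : (∫ y : ℝ, y ^ 2 * ((Real.sqrt n * σ)⁻¹ * φ ((θ₀ + y / Real.sqrt n) / σ))) =
      s ^ 2 * ∫ x, q x := by
    rw [hv2g_eq]
    have h1 : (fun y : ℝ => s * q (y / s + t)) = fun y => s * (fun x => q (x + t)) (y / s) := rfl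
    rw [h1, integral_const_mul, MeasureTheory.Measure.integral_comp_div (fun x => q (x + t)) s,
      integral_add_right_eq_self q t, smul_eq_mul, abs_of_pos hs]
    ring
  -- lower bound on Dint
  have hD : ∀ ε : ℝ, c₁ ≤ Dint φ n σ θ₀ ε := by
    intro ε
    set f : ℝ → ℝ := fun v => Real.exp (-v ^ 2 / 2 + ε * v) *
      ((Real.sqrt n * σ)⁻¹ * φ ((θ₀ + v / Real.sqrt n) / σ)) with hf_def
    have hf0 : ∀ v, 0 ≤ f v := fun v =>
      mul_nonneg (Real.exp_pos _).le (mul_nonneg (by positivity) (hφ_nonneg _))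
    have hf_meas : Measurable f :=
      ((measurable_id.pow_const 2).neg.div_const 2 |>.add (measurable_id.const_mul ε)).exp.mul
        hmeas_g
    have hf_int : Integrable f := by
      refine ((int_exp_quad ε).const_mul ((Real.sqrt n * σ)⁻¹ * Cφ)).mono'
        hf_meas.aestronglyMeasurable (ae_of_all _ fun v => ?_)
      rw [Real.norm_eq_abs, abs_of_nonneg (hf0 v), hf_def]
      have h2 : (0:ℝ) ≤ (Real.sqrt n * σ)⁻¹ := by positivity
      have := hub ((θ₀ + v / Real.sqrt n) / σ)
      calc Real.exp (-v ^ 2 / 2 + ε * v) * ((Real.sqrt n * σ)⁻¹ * φ ((θ₀ + v / Real.sqrt n) / σ))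
          ≤ Real.exp (-v ^ 2 / 2 + ε * v) * ((Real.sqrt n * σ)⁻¹ * Cφ) := by
            apply mul_le_mul_of_nonneg_left _ (Real.exp_pos _).le
            exact mul_le_mul_of_nonneg_left this h2
        _ = (Real.sqrt n * σ)⁻¹ * Cφ * Real.exp (-v ^ 2 / 2 + ε * v) := by ring
    have hsS₀ : s ≤ S₀ := hsS
    have hbound : ∀ v, v ∈ Set.Ioo (0:ℝ) s ∨ v ∈ Set.Ioo (-s) (0:ℝ) → 0 ≤ ε * v →
        s⁻¹ * c₁ ≤ f v := by
      intro v hv hev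
      have hv2 : v ^ 2 ≤ S₀ ^ 2 := by
        rcases hv with h | h
        · nlinarith [h.1, h.2]
        · nlinarith [h.1, h.2]
      have hexp : Real.exp (-S₀ ^ 2 / 2) ≤ Real.exp (-v ^ 2 / 2 + ε * v) := by
        apply Real.exp_le_exp.mpr
        nlinarith
      have hφv : cφ ≤ φ ((θ₀ + v / Real.sqrt n) / σ) := by
        apply hlb
        rw [harg v]
        have hvs : v / s ∈ Set.Ioo (-1 : ℝ) 1 := by
          rcases hv with h | h
          · constructor
            · have := div_pos h.1 hs; linarith
            · rw [div_lt_one hs]; exact h.2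
          · constructor
            · rw [Set.mem_Ioo] at h
              rw [neg_lt, ← neg_div]
              rw [div_lt_one hs]; linarith [h.1]
            · have : v / s < 0 := div_neg_of_neg_of_pos h.2 hs
              linarith
        constructor
        · have := hvs.1; have := htM.1; simp only [Set.mem_Ioo] at *; nlinarith
        · have := hvs.2; have := htM.2; nlinarith
      have : Real.exp (-S₀ ^ 2 / 2) * ((Real.sqrt n * σ)⁻¹ * cφ) ≤ f v := by
        rw [hf_def]
        apply mul_le_mul hexp (mul_le_mul_of_nonneg_left hφv (by positivity))
          (by positivity) (Real.exp_pos _).le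
      calc s⁻¹ * c₁ = Real.exp (-S₀ ^ 2 / 2) * ((Real.sqrt n * σ)⁻¹ * cφ) := by
            rw [hc₁, hs_def]; ring
        _ ≤ f v := this
    have key : s⁻¹ * c₁ * s ≤ ∫ v, f v := by
      rcases le_or_gt 0 ε with hε | hε
      · have := lb_aux (f := f) (a := 0) (b := s) (c := s⁻¹ * c₁) (by linarith) hf_int hf0
          (fun v hv => hbound v (Or.inl hv) (mul_nonneg hε hv.1.le))
        simpa using this
      · have := lb_aux (f := f) (a := -s) (b := 0) (c := s⁻¹ * c₁) (by linarith) hf_int hf0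
          (fun v hv => hbound v (Or.inr hv)
            (by nlinarith [hv.2, hε]))
        calc s⁻¹ * c₁ * s = s⁻¹ * c₁ * (0 - -s) := by ring
          _ ≤ ∫ v, f v := this
    have : s⁻¹ * c₁ * s = c₁ := by field_simp
    rw [Dint]
    rw [this] at key
    exact key
  -- nonnegativity of Nint
  have hN0 : ∀ ε : ℝ, 0 ≤ Nint φ n σ θ₀ ε := by
    intro ε
    apply integral_nonneg
    intro v
    exact mul_nonneg (mul_nonneg (sq_nonneg _) (Real.exp_pos _).le)
      (mul_nonneg (by positivity) (hφ_nonneg _))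
  -- product function for Fubini
  set H : ℝ × ℝ → ℝ := fun z => gaussianPDFReal 0 1 z.1 *
    (z.2 ^ 2 * Real.exp (-z.2 ^ 2 / 2 + z.1 * z.2) *
      ((Real.sqrt n * σ)⁻¹ * φ ((θ₀ + z.2 / Real.sqrt n) / σ))) with hH_def
  have hH_meas : Measurable H := by
    apply ((measurable_gaussianPDFReal 0 1).comp measurable_fst).mul
    apply Measurable.mul
    · apply (measurable_snd.pow_const 2).mul
      exact ((measurable_snd.pow_const 2).neg.div_const 2 |>.add
        (measurable_fst.mul measurable_snd)).exp
    · exact hmeas_g.comp measurable_snd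
  have hH0 : ∀ z, 0 ≤ H z := by
    intro z
    exact mul_nonneg (gaussianPDFReal_nonneg _ _ _)
      (mul_nonneg (mul_nonneg (sq_nonneg _) (Real.exp_pos _).le)
        (mul_nonneg (by positivity) (hφ_nonneg _)))
  have hfac : ∀ y : ℝ, (fun x => H (x, y)) =
      fun x => (y ^ 2 * Real.exp (-y ^ 2 / 2) *
        ((Real.sqrt n * σ)⁻¹ * φ ((θ₀ + y / Real.sqrt n) / σ))) *
        (gaussianPDFReal 0 1 x * Real.exp (x * y)) := by
    intro y
    funext x
    rw [hH_def]
    simp only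
    rw [show (-y ^ 2 / 2 + x * y) = (-y ^ 2 / 2) + x * y from rfl, Real.exp_add]
    ring
  have hinner_val : ∀ y : ℝ, (∫ x : ℝ, H (x, y)) =
      y ^ 2 * ((Real.sqrt n * σ)⁻¹ * φ ((θ₀ + y / Real.sqrt n) / σ)) := by
    intro y
    rw [hfac y, integral_const_mul, mgf_val y]
    have e1 : Real.exp (-y ^ 2 / 2) * Real.exp (y ^ 2 / 2) = 1 := by
      rw [← Real.exp_add, show -y ^ 2 / 2 + y ^ 2 / 2 = 0 by ring, Real.exp_zero]
    linear_combination (y ^ 2 * ((Real.sqrt n * σ)⁻¹ * φ ((θ₀ + y / Real.sqrt n) / σ))) * e1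
  have hH_int : Integrable H (volume.prod volume) := by
    rw [integrable_prod_iff' hH_meas.aestronglyMeasurable]
    constructor
    · refine ae_of_all _ fun y => ?_
      rw [hfac y]
      exact (mgf_int y).const_mul _
    · have : (fun y => ∫ x, ‖H (x, y)‖) =
          fun y => y ^ 2 * ((Real.sqrt n * σ)⁻¹ * φ ((θ₀ + y / Real.sqrt n) / σ)) := by
        funext y
        rw [show (fun x => ‖H (x, y)‖) = fun x => H (x, y) from
          funext fun x => Real.norm_of_nonneg (hH0 _)]
        exact hinner_val y
      rw [this]
      exact hIv2g
  have hNint_eq : ∀ ε : ℝ, (∫ y : ℝ, H (ε, y)) = gaussianPDFReal 0 1 ε * Nint φ n σ θ₀ ε := by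
    intro ε
    rw [Nint, ← integral_const_mul]
  have hInt_pN : Integrable (fun ε => gaussianPDFReal 0 1 ε * Nint φ n σ θ₀ ε) := by
    have h := hH_int.integral_prod_left
    have : (fun x : ℝ => ∫ y : ℝ, H (x, y)) =
        fun ε => gaussianPDFReal 0 1 ε * Nint φ n σ θ₀ ε := funext hNint_eq
    rwa [this] at h
  have hswap : (∫ ε : ℝ, gaussianPDFReal 0 1 ε * Nint φ n σ θ₀ ε) =
      ∫ y : ℝ, y ^ 2 * ((Real.sqrt n * σ)⁻¹ * φ ((θ₀ + y / Real.sqrt n) / σ)) := by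
    have h1 : (∫ ε : ℝ, gaussianPDFReal 0 1 ε * Nint φ n σ θ₀ ε) =
        ∫ x : ℝ, ∫ y : ℝ, H (x, y) := by
      congr 1
      exact (funext hNint_eq).symm
    rw [h1, integral_integral_swap (f := fun x y => H (x, y)) hH_int]
    congr 1
    exact funext hinner_val
  -- convert the Gaussian integral to a Lebesgue integral with density
  have hγ : (∫ ε, Bpost φ n σ θ₀ ε ∂(gaussianReal 0 1)) =
      ∫ ε : ℝ, gaussianPDFReal 0 1 ε * Bpost φ n σ θ₀ ε := by
    rw [gaussianReal_of_var_ne_zero 0 one_ne_zero]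
    have hpdf : gaussianPDF 0 1 = fun x =>
        ((Real.toNNReal (gaussianPDFReal 0 1 x) : ℝ≥0) : ENNReal) := rfl
    rw [hpdf, integral_withDensity_eq_integral_smul
      (measurable_gaussianPDFReal 0 1).real_toNNReal]
    congr 1
    funext ε
    rw [NNReal.smul_def, Real.coe_toNNReal _ (gaussianPDFReal_nonneg _ _ _), smul_eq_mul]
  -- pointwise bound and monotonicity
  have hpoint : ∀ ε : ℝ, gaussianPDFReal 0 1 ε * Bpost φ n σ θ₀ ε ≤
      gaussianPDFReal 0 1 ε * Nint φ n σ θ₀ ε * ((n : ℝ) * c₁)⁻¹ := by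
    intro ε
    have hnc : (0:ℝ) < (n : ℝ) * c₁ := mul_pos hn0 hc₁pos
    have hB : Bpost φ n σ θ₀ ε ≤ Nint φ n σ θ₀ ε * ((n : ℝ) * c₁)⁻¹ := by
      rw [Bpost, div_eq_mul_inv]
      apply mul_le_mul_of_nonneg_left _ (hN0 ε)
      apply inv_anti₀ hnc
      exact mul_le_mul_of_nonneg_left (hD ε) hn0.le
    calc gaussianPDFReal 0 1 ε * Bpost φ n σ θ₀ ε
        ≤ gaussianPDFReal 0 1 ε * (Nint φ n σ θ₀ ε * ((n : ℝ) * c₁)⁻¹) :=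
          mul_le_mul_of_nonneg_left hB (gaussianPDFReal_nonneg _ _ _)
      _ = gaussianPDFReal 0 1 ε * Nint φ n σ θ₀ ε * ((n : ℝ) * c₁)⁻¹ := by ring
  have hBpos : ∀ ε : ℝ, 0 ≤ gaussianPDFReal 0 1 ε * Bpost φ n σ θ₀ ε := by
    intro ε
    apply mul_nonneg (gaussianPDFReal_nonneg _ _ _)
    rw [Bpost]
    exact div_nonneg (hN0 ε) (mul_nonneg hn0.le (le_trans hc₁pos.le (hD ε)))
  have hmono : (∫ ε : ℝ, gaussianPDFReal 0 1 ε * Bpost φ n σ θ₀ ε) ≤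
      ∫ ε : ℝ, gaussianPDFReal 0 1 ε * Nint φ n σ θ₀ ε * ((n : ℝ) * c₁)⁻¹ := by
    apply integral_mono_of_nonneg (ae_of_all _ hBpos) (hInt_pN.mul_const _)
    exact ae_of_all _ hpoint
  -- final computation
  have hq_val : (∫ x, q x) ≤ 2 * (m₂ + M ^ 2) := by
    have hb_int : Integrable (fun x : ℝ => 2 * (x ^ 2 * φ x) + (2 * t ^ 2) * φ x) :=
      (hmom.const_mul 2).add (hφ_int.const_mul (2 * t ^ 2))
    have h1 : (∫ x, q x) ≤ ∫ x : ℝ, 2 * (x ^ 2 * φ x) + (2 * t ^ 2) * φ x := by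
      apply integral_mono hq_int hb_int
      intro x
      rw [hq_def]
      simp only
      nlinarith [hφ_nonneg x, sq_nonneg (x + t)]
    have h2 : (∫ x : ℝ, 2 * (x ^ 2 * φ x) + (2 * t ^ 2) * φ x) = 2 * m₂ + 2 * t ^ 2 := by
      rw [integral_add (hmom.const_mul 2) (hφ_int.const_mul (2 * t ^ 2)),
        integral_const_mul, integral_const_mul, hφ_prob, hm₂]
      ring
    have h3 : t ^ 2 ≤ M ^ 2 := by nlinarith [htM.1, htM.2]
    linarith
  have hs2 : s ^ 2 = (n : ℝ) * σ ^ 2 := by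
    rw [hs_def, mul_pow, Real.sq_sqrt (Nat.cast_nonneg n)]
  calc (∫ ε, Bpost φ n σ θ₀ ε ∂(gaussianReal 0 1))
      = ∫ ε : ℝ, gaussianPDFReal 0 1 ε * Bpost φ n σ θ₀ ε := hγ
    _ ≤ ∫ ε : ℝ, gaussianPDFReal 0 1 ε * Nint φ n σ θ₀ ε * ((n : ℝ) * c₁)⁻¹ := hmono
    _ = (∫ ε : ℝ, gaussianPDFReal 0 1 ε * Nint φ n σ θ₀ ε) * ((n : ℝ) * c₁)⁻¹ :=
        integral_mul_const _ _
    _ = (s ^ 2 * ∫ x, q x) * ((n : ℝ) * c₁)⁻¹ := by rw [hswap, hIv2g_val]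
    _ = (∫ x, q x) * (σ ^ 2 / c₁) := by
        rw [hs2]
        field_simp
    _ ≤ (2 * (m₂ + M ^ 2)) * (σ ^ 2 / c₁) := by
        apply mul_le_mul_of_nonneg_right hq_val
        positivity
    _ = 2 * (m₂ + M ^ 2) / c₁ * σ ^ 2 := by ring
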